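/- Let T_{N+1} = [[T_N, 0],[B_N, C₀]] where T_N is a contractive lower triangular Toeplitz block matrix and B_N = [C_{N+1}, ..., C₁]. If (D²_{T_k})_M = 0 for some k ≤ N-1 (shorted with respect to the first coordinate copy of M), then (D²_{T_j})_M = 0 for all j with k ≤ j ≤ N. -/

import Mathlib

set_option synthInstance.maxHeartbeats 400000
open ContinuousLinearMap

variable {M N : Type*} [NormedAddCommGroup M] [InnerProductSpace ℂ M] [CompleteSpace M]
  [NormedAddCommGroup N] [InnerProductSpace ℂ N] [CompleteSpace N]


instance piLpCompleteSpace {ι : Type*} [Fintype ι] (E : ι → Type*)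
    [∀ i, NormedAddCommGroup (E i)] [∀ i, CompleteSpace (E i)] :
    CompleteSpace (PiLp 2 E) :=
  inferInstance

/-- `W` is the Kreĭn shorted operator of `S` with respect to the closed subspace `K`. -/
def IsShortedOp {H : Type*} [NormedAddCommGroup H] [InnerProductSpace ℂ H]
    [CompleteSpace H] (S W : H →L[ℂ] H) (K : Submodule ℂ H) : Prop :=
  IsSelfAdjoint W ∧
    ∀ f : H, (inner ℂ (W f) f : ℂ).re = ⨅ φ : Kᗮ, (inner ℂ (S (f + φ)) (f + φ) : ℂ).re

/-- The first coordinate copy of `M` inside `M^{k+1}`. -/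
def firstCoord (M : Type*) [NormedAddCommGroup M] [InnerProductSpace ℂ M] (k : ℕ) :
    Submodule ℂ (PiLp 2 fun _ : Fin (k + 1) => M) where
  carrier := {f | ∀ i : Fin (k + 1), i ≠ 0 → f i = 0}
  add_mem' := by
    intro a b ha hb i hi
    show a i + b i = 0
    rw [ha i hi, hb i hi, add_zero]
  zero_mem' := fun i _ => rfl
  smul_mem' := by
    intro c a ha i hi
    show c • a i = 0
    rw [ha i hi, smul_zero]

/-- The embedding of `M` onto the first coordinate of `M^{k+1}`. -/
def emb (M : Type*) [NormedAddCommGroup M] [InnerProductSpace ℂ M] (k : ℕ) (m : M) :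
    PiLp 2 fun _ : Fin (k + 1) => M :=
  WithLp.toLp 2 fun i : Fin (k + 1) => if i = 0 then m else 0

section Aux

variable {X Y : Type*} [NormedAddCommGroup X] [InnerProductSpace ℂ X]
  [NormedAddCommGroup Y] [InnerProductSpace ℂ Y]

/-- Pad a vector in `X^{a+1}` with zeros to get a vector in `X^{b+1}`. -/
def pad {a b : ℕ} (_ : a ≤ b) (f : PiLp 2 fun _ : Fin (a + 1) => X) :
    PiLp 2 fun _ : Fin (b + 1) => X :=
  WithLp.toLp 2 fun i => if h : (i : ℕ) < a + 1 then f ⟨i, h⟩ else 0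

lemma norm_sq_pi {n : ℕ} (x : PiLp 2 fun _ : Fin (n + 1) => X) :
    ‖x‖ ^ 2 = ∑ i ∈ Finset.range (n + 1),
      (if h : i < n + 1 then ‖x ⟨i, h⟩‖ ^ 2 else 0) := by
  rw [PiLp.norm_sq_eq_of_L2,
    ← Fin.sum_univ_eq_sum_range (fun i => if h : i < n + 1 then ‖x ⟨i, h⟩‖ ^ 2 else 0)]
  exact Finset.sum_congr rfl fun i _ => by rw [dif_pos i.isLt]

lemma pad_norm_sq {a b : ℕ} (hab : a ≤ b) (f : PiLp 2 fun _ : Fin (a + 1) => X) :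
    ‖pad hab f‖ ^ 2 = ‖f‖ ^ 2 := by
  rw [norm_sq_pi, norm_sq_pi]
  rw [← Finset.sum_subset (Finset.range_subset_range.2 (by omega) :
      Finset.range (a + 1) ⊆ Finset.range (b + 1))]
  · refine Finset.sum_congr rfl fun i hi => ?_
    rw [Finset.mem_range] at hi
    rw [dif_pos hi, dif_pos (by omega : i < b + 1)]
    simp only [pad, WithLp.ofLp_toLp, dif_pos hi]
  · intro i hi hni
    rw [Finset.mem_range] at hi
    rw [Finset.mem_range, not_lt] at hni
    rw [dif_pos hi]
    simp only [pad, WithLp.ofLp_toLp, dif_neg (by omega : ¬ (i < a + 1))]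
    simp

lemma toe_pad (C : ℕ → (X →L[ℂ] Y))
    (T : (k : ℕ) → (PiLp 2 fun _ : Fin (k + 1) => X) →L[ℂ]
      (PiLp 2 fun _ : Fin (k + 1) => Y))
    (hToe : ∀ (k : ℕ) (f : PiLp 2 fun _ : Fin (k + 1) => X) (i : Fin (k + 1)),
      T k f i = ∑ j : Fin (k + 1), if (j : ℕ) ≤ (i : ℕ) then C ((i : ℕ) - (j : ℕ)) (f j) else 0)
    {a b : ℕ} (hab : a ≤ b) (f : PiLp 2 fun _ : Fin (a + 1) => X) (i : Fin (a + 1)) :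
    T b (pad hab f) ⟨(i : ℕ), lt_of_lt_of_le i.isLt (by omega)⟩ = T a f i := by
  rw [hToe, hToe]
  have hb : (∑ j : Fin (b + 1), if (j : ℕ) ≤ (i : ℕ) then
      C ((i : ℕ) - (j : ℕ)) (pad hab f j) else 0) =
      ∑ j ∈ Finset.range (b + 1), (if hj : j < b + 1 then
        (if j ≤ (i : ℕ) then C ((i : ℕ) - j) (pad hab f ⟨j, hj⟩) else 0) else 0) := by
    rw [← Fin.sum_univ_eq_sum_range]
    exact Finset.sum_congr rfl fun j _ => by rw [dif_pos j.isLt]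
  have ha : (∑ j : Fin (a + 1), if (j : ℕ) ≤ (i : ℕ) then
      C ((i : ℕ) - (j : ℕ)) (f j) else 0) =
      ∑ j ∈ Finset.range (a + 1), (if hj : j < a + 1 then
        (if j ≤ (i : ℕ) then C ((i : ℕ) - j) (f ⟨j, hj⟩) else 0) else 0) := by
    rw [← Fin.sum_univ_eq_sum_range]
    exact Finset.sum_congr rfl fun j _ => by rw [dif_pos j.isLt]
  rw [hb, ha]
  rw [← Finset.sum_subset (Finset.range_subset_range.2 (by omega) :
      Finset.range (a + 1) ⊆ Finset.range (b + 1))]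
  · refine Finset.sum_congr rfl fun jj hj => ?_
    rw [Finset.mem_range] at hj
    rw [dif_pos hj, dif_pos (by omega : jj < b + 1)]
    by_cases hji : jj ≤ (i : ℕ)
    · rw [if_pos hji, if_pos hji]
      simp only [pad, WithLp.ofLp_toLp, dif_pos hj]
    · rw [if_neg hji, if_neg hji]
  · intro jj hj hnj
    rw [Finset.mem_range] at hj
    rw [Finset.mem_range, not_lt] at hnj
    rw [dif_pos hj, if_neg (by omega : ¬ (jj ≤ (i : ℕ)))]

lemma Tnorm_mono (C : ℕ → (X →L[ℂ] Y))
    (T : (k : ℕ) → (PiLp 2 fun _ : Fin (k + 1) => X) →L[ℂ]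
      (PiLp 2 fun _ : Fin (k + 1) => Y))
    (hToe : ∀ (k : ℕ) (f : PiLp 2 fun _ : Fin (k + 1) => X) (i : Fin (k + 1)),
      T k f i = ∑ j : Fin (k + 1), if (j : ℕ) ≤ (i : ℕ) then C ((i : ℕ) - (j : ℕ)) (f j) else 0)
    {a b : ℕ} (hab : a ≤ b) (f : PiLp 2 fun _ : Fin (a + 1) => X) :
    ‖T a f‖ ^ 2 ≤ ‖T b (pad hab f)‖ ^ 2 := by
  rw [norm_sq_pi, norm_sq_pi]
  calc (∑ i ∈ Finset.range (a + 1),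
        if h : i < a + 1 then ‖T a f ⟨i, h⟩‖ ^ 2 else 0)
      = ∑ i ∈ Finset.range (a + 1),
        (if h : i < b + 1 then ‖T b (pad hab f) ⟨i, h⟩‖ ^ 2 else 0) := by
        refine Finset.sum_congr rfl fun i hi => ?_
        rw [Finset.mem_range] at hi
        rw [dif_pos hi, dif_pos (by omega : i < b + 1)]
        congr 1
        exact congrArg Norm.norm (toe_pad C T hToe hab f ⟨i, hi⟩).symm
    _ ≤ ∑ i ∈ Finset.range (b + 1),
        (if h : i < b + 1 then ‖T b (pad hab f) ⟨i, h⟩‖ ^ 2 else 0) := by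
        refine Finset.sum_le_sum_of_subset_of_nonneg
          (Finset.range_subset_range.2 (by omega)) fun i _ _ => ?_
        split
        · positivity
        · exact le_refl 0

lemma q_eq {H K : Type*} [NormedAddCommGroup H] [InnerProductSpace ℂ H] [CompleteSpace H]
    [NormedAddCommGroup K] [InnerProductSpace ℂ K] [CompleteSpace K]
    (A : H →L[ℂ] K) (h : H) :
    ((inner ℂ (((1 : H →L[ℂ] H) - ContinuousLinearMap.adjoint A ∘L A) h) h : ℂ)).re
      = ‖h‖ ^ 2 - ‖A h‖ ^ 2 := by
  simp only [ContinuousLinearMap.sub_apply, ContinuousLinearMap.one_apply,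
    ContinuousLinearMap.comp_apply, inner_sub_left,
    ContinuousLinearMap.adjoint_inner_left]
  have e1 : (inner ℂ h h : ℂ).re = ‖h‖ ^ 2 := by
    rw [← RCLike.re_to_complex]; exact inner_self_eq_norm_sq h
  have e2 : (inner ℂ (A h) (A h) : ℂ).re = ‖A h‖ ^ 2 := by
    rw [← RCLike.re_to_complex]; exact inner_self_eq_norm_sq (A h)
  rw [Complex.sub_re, e1, e2]

lemma mem_firstCoord_orthogonal {n : ℕ} (g : PiLp 2 fun _ : Fin (n + 1) => X) :
    g ∈ (firstCoord X n)ᗮ ↔ g 0 = 0 := by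
  rw [Submodule.mem_orthogonal]
  constructor
  · intro hg
    have hmem : emb X n (g 0) ∈ firstCoord X n := by
      intro i hi
      simp only [emb, WithLp.ofLp_toLp, if_neg hi]
    have h0 := hg (emb X n (g 0)) hmem
    rw [PiLp.inner_apply] at h0
    rw [Fintype.sum_eq_single (0 : Fin (n + 1)) (fun i hi => by
      simp only [emb, WithLp.ofLp_toLp, if_neg hi, inner_zero_left])] at h0
    simp only [emb, WithLp.ofLp_toLp, if_pos rfl] at h0
    exact inner_self_eq_zero.mp h0
  · intro h0 u hu
    rw [PiLp.inner_apply]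
    refine Finset.sum_eq_zero fun i _ => ?_
    by_cases hi : i = 0
    · rw [hi, h0, inner_zero_right]
    · rw [hu i hi, inner_zero_left]

end Aux

set_option maxHeartbeats 1000000

/-- For a Schur sequence `C₀, …, C_N` (i.e. the lower triangular
block Toeplitz matrix `T_N` is a contraction), if the shorted operator
`(D²_{T_k})_M = 0` for some `k ≤ N - 1` (shorted with respect to the first coordinate
copy of `M`), then `(D²_{T_j})_M = 0` for all `j` with `k ≤ j ≤ N`. -/
theorem shorted_toeplitz_zero_propagates (C : ℕ → (M →L[ℂ] N)) (Nn : ℕ)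
    (T : (k : ℕ) → (PiLp 2 fun _ : Fin (k + 1) => M) →L[ℂ]
      (PiLp 2 fun _ : Fin (k + 1) => N))
    (hToe : ∀ (k : ℕ) (f : PiLp 2 fun _ : Fin (k + 1) => M) (i : Fin (k + 1)),
      T k f i = ∑ j : Fin (k + 1), if (j : ℕ) ≤ (i : ℕ) then C ((i : ℕ) - (j : ℕ)) (f j) else 0)
    (hTc : ‖T Nn‖ ≤ 1)
    (W : (k : ℕ) → (PiLp 2 fun _ : Fin (k + 1) => M) →L[ℂ]
      (PiLp 2 fun _ : Fin (k + 1) => M))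
    (hWpos : ∀ k, (W k).IsPositive)
    (hW : ∀ k, IsShortedOp (1 - (ContinuousLinearMap.adjoint (T k)) ∘L T k)
      (W k) (firstCoord M k))
    (k : ℕ) (hk : k ≤ Nn - 1) (hWk : W k = 0) :
    ∀ j : ℕ, k ≤ j → j ≤ Nn → W j = 0 := by
  intro j hkj hjN
  have hkN : k ≤ Nn := le_trans hkj hjN
  -- contractivity of the compressions
  have hcontr : ∀ (a : ℕ), a ≤ Nn → ∀ f : PiLp 2 fun _ : Fin (a + 1) => M,
      ‖T a f‖ ^ 2 ≤ ‖f‖ ^ 2 := by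
    intro a haN f
    have h1 := Tnorm_mono C T hToe haN f
    have h2 : ‖T Nn (pad haN f)‖ ≤ ‖T Nn‖ * ‖pad haN f‖ := (T Nn).le_opNorm _
    have h3 : ‖pad haN f‖ ^ 2 = ‖f‖ ^ 2 := pad_norm_sq haN f
    have h4 : ‖T Nn (pad haN f)‖ ^ 2 ≤ ‖T Nn‖ ^ 2 * ‖pad haN f‖ ^ 2 := by
      have h5 := pow_le_pow_left₀ (norm_nonneg (T Nn (pad haN f))) h2 2
      nlinarith
    have h6 : ‖T Nn‖ ^ 2 ≤ 1 := by nlinarith [opNorm_nonneg (T Nn)]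
    have h7 := mul_le_mul_of_nonneg_right h6 (sq_nonneg ‖pad haN f‖)
    nlinarith
  -- the quadratic form of `W j` vanishes
  have key : ∀ f : PiLp 2 fun _ : Fin (j + 1) => M,
      ((inner ℂ ((W j) f) f : ℂ)).re = 0 := by
    intro f
    have hpos : (0 : ℝ) ≤ ((inner ℂ ((W j) f) f : ℂ)).re := (hWpos j).2 f
    have hub : ∀ ε : ℝ, 0 < ε → ((inner ℂ ((W j) f) f : ℂ)).re < ε := by
      intro ε hε
      rw [(hW j).2 f]
      -- level-k infimum is zero since `W k = 0`
      have h0 : (⨅ ψ : (firstCoord M k)ᗮ,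
          (inner ℂ ((1 - ContinuousLinearMap.adjoint (T k) ∘L T k)
            (emb M k (f 0) + ψ)) (emb M k (f 0) + ψ) : ℂ).re) = 0 := by
        rw [← (hW k).2 (emb M k (f 0)), hWk]
        simp
      have hlt : (⨅ ψ : (firstCoord M k)ᗮ,
          (inner ℂ ((1 - ContinuousLinearMap.adjoint (T k) ∘L T k)
            (emb M k (f 0) + ψ)) (emb M k (f 0) + ψ) : ℂ).re) < ε := by
        rw [h0]; exact hε
      have : Nonempty ((firstCoord M k)ᗮ : Submodule ℂ _) := ⟨0⟩
      obtain ⟨ψ, hψ⟩ := exists_lt_of_ciInf_lt hlt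
      set h : PiLp 2 fun _ : Fin (k + 1) => M := emb M k (f 0) + ψ.1 with hh
      have hψ0 : (ψ : PiLp 2 fun _ : Fin (k + 1) => M) 0 = 0 :=
        (mem_firstCoord_orthogonal _).mp ψ.2
      have hh0 : h 0 = f 0 := by
        show emb M k (f 0) 0 + (ψ : PiLp 2 fun _ : Fin (k + 1) => M) 0 = f 0
        rw [hψ0, add_zero]
        simp [emb]
      set g : PiLp 2 fun _ : Fin (j + 1) => M := pad hkj h with hg
      have hg0 : g 0 = f 0 := by
        show pad hkj h 0 = f 0
        simp only [pad, WithLp.ofLp_toLp]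
        rw [dif_pos (by simp : ((0 : Fin (j + 1)) : ℕ) < k + 1)]
        rw [show (⟨((0 : Fin (j + 1)) : ℕ), by simp⟩ : Fin (k + 1)) = 0 by
          apply Fin.ext; simp]
        exact hh0
      have hφmem : g - f ∈ (firstCoord M j)ᗮ := by
        rw [mem_firstCoord_orthogonal]
        show g 0 - f 0 = 0
        rw [hg0, sub_self]
      refine lt_of_le_of_lt (ciInf_le ⟨0, ?_⟩ (⟨g - f, hφmem⟩ : ((firstCoord M j)ᗮ :
          Submodule ℂ (PiLp 2 fun _ : Fin (j + 1) => M)))) ?_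
      · rintro x ⟨φ, rfl⟩
        dsimp only
        rw [q_eq]
        have := hcontr j hjN (f + φ)
        linarith
      · dsimp only
        rw [q_eq]
        have hfg : f + ((⟨g - f, hφmem⟩ : ((firstCoord M j)ᗮ :
            Submodule ℂ (PiLp 2 fun _ : Fin (j + 1) => M))) :
            PiLp 2 fun _ : Fin (j + 1) => M) = g := by
          show f + (g - f) = g
          abel
        rw [hfg]
        rw [q_eq] at hψ
        have h1 := Tnorm_mono C T hToe hkj h
        have h2 := pad_norm_sq hkj h
        rw [hg]
        linarith
    rcases lt_or_ge 0 (((inner ℂ ((W j) f) f : ℂ)).re) with hc | hc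
    · exact absurd (hub _ hc) (lt_irrefl _)
    · linarith
  -- from vanishing quadratic form to `W j = 0`
  have hsa : IsSelfAdjoint (W j) := (hWpos j).isSelfAdjoint
  have hreal : ∀ f : PiLp 2 fun _ : Fin (j + 1) => M, (inner ℂ ((W j) f) f : ℂ) = 0 := by
    intro f
    have h1 : (starRingEnd ℂ) (inner ℂ ((W j) f) f : ℂ) = inner ℂ ((W j) f) f := by
      rw [inner_conj_symm]
      calc (inner ℂ f ((W j) f) : ℂ)
          = inner ℂ f ((ContinuousLinearMap.adjoint (W j)) f) := by
            rw [hsa.adjoint_eq]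
        _ = inner ℂ ((W j) f) f := ContinuousLinearMap.adjoint_inner_right _ _ _
    have h2 := Complex.conj_eq_iff_re.mp h1
    rw [← h2, key f]
    simp
  have hlin : ((W j : (PiLp 2 fun _ : Fin (j + 1) => M) →ₗ[ℂ]
      (PiLp 2 fun _ : Fin (j + 1) => M))) = 0 :=
    (inner_map_self_eq_zero _).mp hreal
  refine ContinuousLinearMap.ext fun x => ?_
  simpa using LinearMap.congr_fun hlin x
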